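/- Every finite poset that is a disjoint union of chains (any two elements comparable to a common element are themselves comparable) is sub-representable. -/

import Mathlib

def SubRepresentable (α : Type*) [PartialOrder α] : Prop :=
  ∃ g : Set α → Set α,
    (∀ P₁ P₂ : Set α, Nonempty (↥P₁ ↪o ↥P₂) ↔ g P₁ ⊆ g P₂) ∧
    ∀ P₁ : Set α, Nonempty (↥P₁ ↪o ↥(g P₁)) ∧ Nonempty (↥(g P₁) ↪o ↥P₁)
def IsDisjointUnionOfChains (α : Type*) [PartialOrder α] : Prop :=
  ∀ a b c : α, (a ≤ c ∨ c ≤ a) → (b ≤ c ∨ c ≤ b) → (a ≤ b ∨ b ≤ a)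

namespace SubrepAux
open Finset
open scoped Classical
set_option linter.unusedSectionVars false
set_option linter.unusedVariables false

variable {α : Type*} [PartialOrder α] [Fintype α]

/-- height of `a` within `P`: number of elements of `P` below (or equal) `a`. -/
noncomputable def ht (P : Finset α) (a : α) : ℕ := (P.filter (· ≤ a)).card

/-- maximal elements of `P`. -/
noncomputable def maxs (P : Finset α) : Finset α :=
  P.filter (fun m => ∀ x ∈ P, m ≤ x → x = m)

/-- number of chains of `P` of size at least `k`. -/
noncomputable def f (P : Finset α) (k : ℕ) : ℕ :=
  ((maxs P).filter (fun m => k ≤ ht P m)).card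

noncomputable def nu (a : α) : ℕ := (Fintype.equivFin α a : ℕ)

noncomputable def key (P : Finset α) (m : α) : ℕ :=
  (Fintype.card α + 1 - ht P m) * (Fintype.card α + 1) + nu m

noncomputable def idx (P : Finset α) (m : α) : ℕ :=
  ((maxs P).filter (fun m' => key P m' < key P m)).card

lemma nu_inj : Function.Injective (nu (α := α)) := by
  intro a b hab
  have := (Fintype.equivFin α).injective (Fin.val_injective hab)
  exact this

lemma nu_lt (a : α) : nu a < Fintype.card α + 1 :=
  lt_of_lt_of_le (Fin.is_lt _) (Nat.le_succ _)

lemma ht_le_card (P : Finset α) (a : α) : ht P a ≤ Fintype.card α :=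
  le_trans (card_le_card (filter_subset _ _))
    (le_trans (card_le_card (subset_univ _)) card_univ.le)

lemma nat_key_aux {a b v v' C : ℕ} (hab : a < b) (hv' : v' < C) :
    a * C + v' < b * C + v := by
  have h1 : a * C + v' < (a + 1) * C := by
    rw [add_mul, one_mul]; exact Nat.add_lt_add_left hv' _
  have h2 : (a + 1) * C ≤ b * C := Nat.mul_le_mul_right _ hab
  omega

/-- bigger height means smaller key -/
lemma key_lt_of_ht_lt {P : Finset α} {m m' : α} (hlt : ht P m < ht P m') :
    key P m' < key P m := by
  have hm' : ht P m' ≤ Fintype.card α := ht_le_card P m'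
  unfold key
  exact nat_key_aux (by omega) (nu_lt m')

lemma key_inj (P : Finset α) : Function.Injective (key P) := by
  intro m m' hk
  rcases lt_trichotomy (ht P m) (ht P m') with hlt | heq | hlt
  · exact absurd hk (ne_of_gt (key_lt_of_ht_lt hlt))
  · unfold key at hk
    rw [heq] at hk
    exact nu_inj (Nat.add_left_cancel hk)
  · exact absurd hk (ne_of_lt (key_lt_of_ht_lt hlt))

lemma ht_le_of_key_le {P : Finset α} {m m' : α} (hk : key P m' ≤ key P m) :
    ht P m ≤ ht P m' := by
  by_contra hc
  exact absurd (key_lt_of_ht_lt (not_le.mp hc)) (not_lt.mpr hk)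

lemma mem_maxs {P : Finset α} {m : α} :
    m ∈ maxs P ↔ m ∈ P ∧ ∀ x ∈ P, m ≤ x → x = m := by
  simp [maxs]

lemma ht_mono (P : Finset α) {a b : α} (hab : a ≤ b) : ht P a ≤ ht P b := by
  apply card_le_card
  intro x hx
  rw [mem_filter] at hx ⊢
  exact ⟨hx.1, le_trans hx.2 hab⟩

lemma ht_pos {P : Finset α} {a : α} (ha : a ∈ P) : 1 ≤ ht P a := by
  have : a ∈ P.filter (· ≤ a) := mem_filter.mpr ⟨ha, le_refl a⟩
  exact card_pos.mpr ⟨a, this⟩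

lemma ht_strict_mono (P : Finset α) {a b : α} (ha : a ∈ P) (hb : b ∈ P) (hab : a < b) :
    ht P a < ht P b := by
  apply card_lt_card
  constructor
  · intro x hx
    rw [mem_filter] at hx ⊢
    exact ⟨hx.1, le_trans hx.2 hab.le⟩
  · intro hsub
    have : b ∈ P.filter (· ≤ a) := hsub (mem_filter.mpr ⟨hb, le_refl b⟩)
    rw [mem_filter] at this
    exact absurd (le_antisymm this.2 hab.le) (ne_of_lt hab).symm

/-- among comparable elements of `P`, `ht` detects order -/
lemma le_of_ht_le {P : Finset α} {a b : α} (ha : a ∈ P) (hb : b ∈ P)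
    (hcmp : a ≤ b ∨ b ≤ a) (hht : ht P a ≤ ht P b) : a ≤ b := by
  rcases hcmp with h1 | h1
  · exact h1
  · rcases eq_or_lt_of_le h1 with rfl | h2
    · exact le_refl _
    · exact absurd (ht_strict_mono P hb ha h2) (not_lt.mpr hht)

lemma eq_of_ht_eq {P : Finset α} {a b : α} (ha : a ∈ P) (hb : b ∈ P)
    (hcmp : a ≤ b ∨ b ≤ a) (hht : ht P a = ht P b) : a = b :=
  le_antisymm (le_of_ht_le ha hb hcmp hht.le)
    (le_of_ht_le hb ha hcmp.symm hht.ge)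

lemma f_antitone (P : Finset α) : Antitone (f P) := by
  intro k k' hk
  apply card_le_card
  intro m hm
  rw [mem_filter] at hm ⊢
  exact ⟨hm.1, le_trans hk hm.2⟩


lemma ht_le_ht_of_subset {P Q : Finset α} (hPQ : P ⊆ Q) (a : α) : ht P a ≤ ht Q a := by
  apply card_le_card
  intro x hx
  rw [mem_filter] at hx ⊢
  exact ⟨hPQ hx.1, hx.2⟩

lemma maxs_eq_of_cmp {P : Finset α} {m m' : α} (hm : m ∈ maxs P) (hm' : m' ∈ maxs P)
    (hcmp : m ≤ m' ∨ m' ≤ m) : m = m' := by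
  rw [mem_maxs] at hm hm'
  rcases hcmp with h1 | h1
  · exact (hm.2 m' hm'.1 h1).symm
  · exact hm'.2 m hm.1 h1

lemma exists_top {P : Finset α} {a : α} (ha : a ∈ P) :
    ∃ m, m ∈ maxs P ∧ a ≤ m := by
  have hne : (P.filter (a ≤ ·)).Nonempty := ⟨a, mem_filter.mpr ⟨ha, le_refl a⟩⟩
  obtain ⟨m, hm, hmax⟩ := Finset.exists_maximal hne
  beta_reduce at hm
  rw [mem_filter] at hm
  refine ⟨m, mem_maxs.mpr ⟨hm.1, ?_⟩, hm.2⟩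
  intro x hx hmx
  by_contra hne'
  exact hne' (le_antisymm (hmax (mem_filter.mpr ⟨hx, le_trans hm.2 hmx⟩) hmx) hmx)

noncomputable def top (P : Finset α) (a : α) : α :=
  if hex : ∃ m, m ∈ maxs P ∧ a ≤ m then hex.choose else a

lemma top_spec {P : Finset α} {a : α} (ha : a ∈ P) :
    top P a ∈ maxs P ∧ a ≤ top P a := by
  rw [top, dif_pos (exists_top ha)]
  exact (exists_top ha).choose_spec

section withH
variable (h : IsDisjointUnionOfChains α)
include h

lemma top_eq_of_le {P : Finset α} {a m : α} (ha : a ∈ P) (hm : m ∈ maxs P)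
    (ham : a ≤ m) : top P a = m := by
  obtain ⟨ht1, ht2⟩ := top_spec ha
  exact maxs_eq_of_cmp ht1 hm (h _ _ a (Or.inr ht2) (Or.inr ham))

lemma top_eq_top_of_cmp {P : Finset α} {a b : α} (ha : a ∈ P) (hb : b ∈ P)
    (hab : a ≤ b ∨ b ≤ a) : top P a = top P b := by
  rcases hab with h1 | h1
  · exact top_eq_of_le h ha (top_spec hb).1 (le_trans h1 (top_spec hb).2)
  · exact (top_eq_of_le h hb (top_spec ha).1 (le_trans h1 (top_spec ha).2)).symm

lemma exists_pick {P : Finset α} {a : α} {k : ℕ} (ha : a ∈ P) (h1 : 1 ≤ k)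
    (h2 : k ≤ ht P a) : ∃ d, d ∈ P ∧ d ≤ a ∧ ht P d = k := by
  have hsurj := Finset.surj_on_of_inj_on_of_card_le
    (s := P.filter (· ≤ a)) (t := Finset.Icc 1 (ht P a))
    (fun x _ => ht P x)
    (fun x hx => by
      rw [mem_filter] at hx
      exact Finset.mem_Icc.mpr ⟨ht_pos hx.1, ht_mono P hx.2⟩)
    (fun x y hx hy hxy => by
      rw [mem_filter] at hx hy
      exact eq_of_ht_eq hx.1 hy.1 (h x y a (Or.inl hx.2) (Or.inl hy.2)) hxy)
    (by rw [Nat.card_Icc]; simp [ht])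
  obtain ⟨d, hd, hdk⟩ := hsurj k (Finset.mem_Icc.mpr ⟨h1, h2⟩)
  rw [mem_filter] at hd
  exact ⟨d, hd.1, hd.2, hdk.symm⟩

end withH

noncomputable def pick (P : Finset α) (a : α) (k : ℕ) : α :=
  if hex : ∃ d, d ∈ P ∧ d ≤ a ∧ ht P d = k then hex.choose else a

lemma pick_spec (h : IsDisjointUnionOfChains α) {P : Finset α} {a : α} {k : ℕ}
    (ha : a ∈ P) (h1 : 1 ≤ k) (h2 : k ≤ ht P a) :
    pick P a k ∈ P ∧ pick P a k ≤ a ∧ ht P (pick P a k) = k := by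
  rw [pick, dif_pos (exists_pick h ha h1 h2)]
  exact (exists_pick h ha h1 h2).choose_spec

lemma idx_lt_card {P : Finset α} {m : α} (hm : m ∈ maxs P) :
    idx P m < (maxs P).card := by
  apply card_lt_card
  constructor
  · exact filter_subset _ _
  · intro hsub
    have := mem_filter.mp (hsub hm)
    exact lt_irrefl _ this.2

lemma idx_lt_idx {P : Finset α} {m m' : α} (hm : m ∈ maxs P)
    (hk : key P m < key P m') : idx P m < idx P m' := by
  apply card_lt_card
  constructor
  · intro x hx
    rw [mem_filter] at hx ⊢
    exact ⟨hx.1, lt_trans hx.2 hk⟩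
  · intro hsub
    have := mem_filter.mp (hsub (mem_filter.mpr ⟨hm, hk⟩))
    exact lt_irrefl _ this.2

lemma idx_injOn {P : Finset α} {m m' : α} (hm : m ∈ maxs P) (hm' : m' ∈ maxs P)
    (heq : idx P m = idx P m') : m = m' := by
  rcases lt_trichotomy (key P m) (key P m') with hk | hk | hk
  · exact absurd heq (ne_of_lt (idx_lt_idx hm hk))
  · exact key_inj P hk
  · exact absurd heq (ne_of_gt (idx_lt_idx hm' hk))

lemma idx_surj {P : Finset α} {t : ℕ} (ht' : t < (maxs P).card) :
    ∃ m, m ∈ maxs P ∧ idx P m = t := by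
  have hsurj := Finset.surj_on_of_inj_on_of_card_le
    (s := maxs P) (t := Finset.range (maxs P).card)
    (fun m _ => idx P m)
    (fun m hm => Finset.mem_range.mpr (idx_lt_card hm))
    (fun x y hx hy hxy => idx_injOn hx hy hxy)
    (by rw [Finset.card_range])
  obtain ⟨m, hm, hmt⟩ := hsurj t (Finset.mem_range.mpr ht')
  exact ⟨m, hm, hmt.symm⟩

/-- Crux: the chain at index `i` has size `≥ k` iff `i < f P k`. -/
lemma idx_lt_f_iff {P : Finset α} {m : α} {k : ℕ} (hm : m ∈ maxs P) :
    idx P m < f P k ↔ k ≤ ht P m := by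
  constructor
  · intro hlt
    by_contra hc
    push_neg at hc
    have hsub : (maxs P).filter (fun m' => k ≤ ht P m') ⊆
        (maxs P).filter (fun m' => key P m' < key P m) := by
      intro m' hm'
      rw [mem_filter] at hm' ⊢
      exact ⟨hm'.1, key_lt_of_ht_lt (lt_of_lt_of_le hc hm'.2)⟩
    exact absurd hlt (not_lt.mpr (card_le_card hsub))
  · intro hk
    apply card_lt_card
    constructor
    · intro m' hm'
      rw [mem_filter] at hm' ⊢
      exact ⟨hm'.1, le_trans hk (ht_le_of_key_le (le_of_lt hm'.2))⟩
    · intro hsub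
      have := mem_filter.mp (hsub (mem_filter.mpr ⟨hm, hk⟩))
      exact lt_irrefl _ this.2

lemma card_idx_lt {P : Finset α} {t : ℕ} (ht' : t ≤ (maxs P).card) :
    ((maxs P).filter (fun m => idx P m < t)).card = t := by
  apply le_antisymm
  · have hle : ((maxs P).filter (fun m => idx P m < t)).card ≤ (Finset.range t).card := by
      apply Finset.card_le_card_of_injOn (fun m => idx P m)
      · intro m hm
        rw [Finset.mem_coe, mem_filter] at hm
        exact Finset.mem_range.mpr hm.2
      · intro x hx y hy hxy
        rw [Finset.mem_coe, mem_filter] at hx hy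
        exact idx_injOn hx.1 hy.1 hxy
    simpa using hle
  · have hle : (Finset.range t).card ≤ ((maxs P).filter (fun m => idx P m < t)).card := by
      apply Finset.card_le_card_of_surjOn (fun m => idx P m)
      intro j hj
      rw [Finset.coe_range, Set.mem_Iio] at hj
      obtain ⟨m, hm, hmj⟩ := idx_surj (lt_of_lt_of_le hj ht')
      exact ⟨m, by rw [Finset.mem_coe, mem_filter]; exact ⟨⟨hm, by omega⟩, hmj⟩⟩
    simpa using hle

lemma f_le_f_univ (h : IsDisjointUnionOfChains α) (P : Finset α) (k : ℕ) :
    f P k ≤ f (univ : Finset α) k := by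
  apply Finset.card_le_card_of_injOn (fun m => top univ m)
  · intro m hm
    rw [Finset.mem_coe, mem_filter] at hm
    have hmem := mem_univ m
    obtain ⟨ht1, ht2⟩ := top_spec (P := univ) hmem
    rw [Finset.mem_coe, mem_filter]
    refine ⟨ht1, ?_⟩
    calc k ≤ ht P m := hm.2
    _ ≤ ht univ m := ht_le_ht_of_subset (subset_univ P) m
    _ ≤ ht univ (top univ m) := ht_mono _ ht2
  · intro x hx y hy hxy
    rw [Finset.mem_coe, mem_filter] at hx hy
    have hx2 := (top_spec (P := univ) (mem_univ x)).2
    have hy2 := (top_spec (P := univ) (mem_univ y)).2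
    simp only at hxy
    rw [hxy] at hx2
    have hcmp : x ≤ y ∨ y ≤ x := h x y _ (Or.inl hx2) (Or.inl hy2)
    exact maxs_eq_of_cmp hx.1 hy.1 hcmp


/-- Main construction: pointwise domination of chain counts gives an embedding. -/
lemma emb_of_f_le (h : IsDisjointUnionOfChains α) {S₁ S₂ : Set α}
    (hf : ∀ k, 1 ≤ k → f S₁.toFinset k ≤ f S₂.toFinset k) :
    Nonempty (↥S₁ ↪o ↥S₂) := by
  set P₁ := S₁.toFinset with hP₁
  set P₂ := S₂.toFinset with hP₂
  have hM : ∀ m : α, ∃ m₂ : α, m ∈ maxs P₁ →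
      m₂ ∈ maxs P₂ ∧ idx P₂ m₂ = idx P₁ m ∧ ht P₁ m ≤ ht P₂ m₂ := by
    intro m
    by_cases hm : m ∈ maxs P₁
    · have hk1 : 1 ≤ ht P₁ m := ht_pos (mem_maxs.mp hm).1
      have hi : idx P₁ m < f P₁ (ht P₁ m) := (idx_lt_f_iff hm).mpr le_rfl
      have hi2 : idx P₁ m < f P₂ (ht P₁ m) := lt_of_lt_of_le hi (hf _ hk1)
      have hcard : f P₂ (ht P₁ m) ≤ (maxs P₂).card := card_le_card (filter_subset _ _)
      obtain ⟨m₂, hm₂, hidx⟩ := idx_surj (lt_of_lt_of_le hi2 hcard)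
      exact ⟨m₂, fun _ => ⟨hm₂, hidx, (idx_lt_f_iff hm₂).mp (hidx ▸ hi2)⟩⟩
    · exact ⟨m, fun hc => absurd hc hm⟩
  choose M hM using hM
  have hE : ∀ a : α, ∃ d : α, a ∈ P₁ →
      d ∈ P₂ ∧ d ≤ M (top P₁ a) ∧ ht P₂ d = ht P₁ a := by
    intro a
    by_cases ha : a ∈ P₁
    · obtain ⟨htop, hle⟩ := top_spec ha
      obtain ⟨hm₂, hidx, hht⟩ := hM (top P₁ a) htop
      have hk1 : 1 ≤ ht P₁ a := ht_pos ha
      have hk2 : ht P₁ a ≤ ht P₂ (M (top P₁ a)) := le_trans (ht_mono P₁ hle) hht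
      obtain ⟨hd1, hd2, hd3⟩ := pick_spec h (mem_maxs.mp hm₂).1 hk1 hk2
      exact ⟨_, fun _ => ⟨hd1, hd2, hd3⟩⟩
    · exact ⟨a, fun hc => absurd hc ha⟩
  choose e he using hE
  refine ⟨OrderEmbedding.ofMapLEIff
    (fun a => ⟨e a.1, Set.mem_toFinset.mp
      ((he a.1 (Set.mem_toFinset.mpr a.2)).1)⟩) ?_⟩
  rintro ⟨a, haS⟩ ⟨b, hbS⟩
  have ha : a ∈ P₁ := Set.mem_toFinset.mpr haS
  have hb : b ∈ P₁ := Set.mem_toFinset.mpr hbS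
  obtain ⟨hda1, hda2, hda3⟩ := he a ha
  obtain ⟨hdb1, hdb2, hdb3⟩ := he b hb
  simp only [Subtype.mk_le_mk]
  constructor
  · intro hde
    have h1 : e a ≤ M (top P₁ b) ∨ M (top P₁ b) ≤ e a :=
      h (e a) (M (top P₁ b)) (e b) (Or.inl hde) (Or.inr hdb2)
    have h2 : M (top P₁ a) ≤ M (top P₁ b) ∨ M (top P₁ b) ≤ M (top P₁ a) :=
      h (M (top P₁ a)) (M (top P₁ b)) (e a) (Or.inr hda2) h1.symm
    have hMa := hM (top P₁ a) (top_spec ha).1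
    have hMb := hM (top P₁ b) (top_spec hb).1
    have hMeq : M (top P₁ a) = M (top P₁ b) := maxs_eq_of_cmp hMa.1 hMb.1 h2
    have hidxeq : idx P₁ (top P₁ a) = idx P₁ (top P₁ b) := by
      rw [← hMa.2.1, ← hMb.2.1, hMeq]
    have htopeq : top P₁ a = top P₁ b :=
      idx_injOn (top_spec ha).1 (top_spec hb).1 hidxeq
    have hcmp : a ≤ b ∨ b ≤ a := h a b (top P₁ b)
      (Or.inl (htopeq ▸ (top_spec ha).2)) (Or.inl (top_spec hb).2)
    apply le_of_ht_le ha hb hcmp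
    calc ht P₁ a = ht P₂ (e a) := hda3.symm
    _ ≤ ht P₂ (e b) := ht_mono P₂ hde
    _ = ht P₁ b := hdb3
  · intro hab
    have htopeq : top P₁ a = top P₁ b := top_eq_top_of_cmp h ha hb (Or.inl hab)
    have hcmp : e a ≤ e b ∨ e b ≤ e a :=
      h (e a) (e b) (M (top P₁ b)) (Or.inl (htopeq ▸ hda2)) (Or.inl hdb2)
    apply le_of_ht_le hda1 hdb1 hcmp
    calc ht P₂ (e a) = ht P₁ a := hda3
    _ ≤ ht P₁ b := ht_mono P₁ hab
    _ = ht P₂ (e b) := hdb3.symm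

/-- Conversely, an embedding forces domination of chain counts. -/
lemma f_le_of_emb (h : IsDisjointUnionOfChains α) {S₁ S₂ : Set α}
    (e : ↥S₁ ↪o ↥S₂) {k : ℕ} (hk : 1 ≤ k) :
    f S₁.toFinset k ≤ f S₂.toFinset k := by
  set P₁ := S₁.toFinset with hP₁
  set P₂ := S₂.toFinset with hP₂
  -- total version of `e`
  set E : α → α := fun x => if hx : x ∈ S₁ then (e ⟨x, hx⟩ : α) else x with hEdef
  have hEmem : ∀ x ∈ P₁, E x ∈ P₂ := by
    intro x hx
    have hx' : x ∈ S₁ := Set.mem_toFinset.mp hx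
    rw [hEdef]
    simp only [dif_pos hx']
    exact Set.mem_toFinset.mpr (e ⟨x, hx'⟩).2
  have hEle : ∀ x y (hx : x ∈ P₁) (hy : y ∈ P₁), (E x ≤ E y ↔ x ≤ y) := by
    intro x y hx hy
    have hx' : x ∈ S₁ := Set.mem_toFinset.mp hx
    have hy' : y ∈ S₁ := Set.mem_toFinset.mp hy
    rw [hEdef]
    simp only [dif_pos hx', dif_pos hy']
    rw [Subtype.coe_le_coe, e.le_iff_le, Subtype.mk_le_mk]
  have hEht : ∀ x ∈ P₁, ht P₁ x ≤ ht P₂ (E x) := by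
    intro x hx
    apply Finset.card_le_card_of_injOn E
    · intro y hy
      rw [Finset.mem_coe, mem_filter] at hy ⊢
      exact ⟨hEmem y hy.1, (hEle y x hy.1 hx).mpr hy.2⟩
    · intro y hy z hz hyz
      rw [Finset.mem_coe, mem_filter] at hy hz
      exact le_antisymm ((hEle y z hy.1 hz.1).mp (le_of_eq hyz))
        ((hEle z y hz.1 hy.1).mp (le_of_eq hyz.symm))
  apply Finset.card_le_card_of_injOn (fun m => top P₂ (E (pick P₁ m k)))
  · intro m hm
    rw [Finset.mem_coe, mem_filter] at hm
    have hmP : m ∈ P₁ := (mem_maxs.mp hm.1).1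
    obtain ⟨hd1, hd2, hd3⟩ := pick_spec h hmP hk hm.2
    have hEd : E (pick P₁ m k) ∈ P₂ := hEmem _ hd1
    obtain ⟨htop1, htop2⟩ := top_spec hEd
    rw [Finset.mem_coe, mem_filter]
    refine ⟨htop1, ?_⟩
    calc k = ht P₁ (pick P₁ m k) := hd3.symm
    _ ≤ ht P₂ (E (pick P₁ m k)) := hEht _ hd1
    _ ≤ ht P₂ (top P₂ (E (pick P₁ m k))) := ht_mono _ htop2
  · intro m hm m' hm' heq
    rw [Finset.mem_coe, mem_filter] at hm hm'
    simp only at heq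
    obtain ⟨hd1, hd2, hd3⟩ := pick_spec h (mem_maxs.mp hm.1).1 hk hm.2
    obtain ⟨hd1', hd2', hd3'⟩ := pick_spec h (mem_maxs.mp hm'.1).1 hk hm'.2
    have hEd : E (pick P₁ m k) ∈ P₂ := hEmem _ hd1
    have hEd' : E (pick P₁ m' k) ∈ P₂ := hEmem _ hd1'
    have c1 : E (pick P₁ m k) ≤ top P₂ (E (pick P₁ m k)) := (top_spec hEd).2
    have c2 : E (pick P₁ m' k) ≤ top P₂ (E (pick P₁ m' k)) := (top_spec hEd').2
    rw [heq] at c1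
    have hcmpE : E (pick P₁ m k) ≤ E (pick P₁ m' k) ∨
        E (pick P₁ m' k) ≤ E (pick P₁ m k) :=
      h _ _ _ (Or.inl c1) (Or.inl c2)
    have hcmp : pick P₁ m k ≤ pick P₁ m' k ∨ pick P₁ m' k ≤ pick P₁ m k := by
      rcases hcmpE with h1 | h1
      · exact Or.inl ((hEle _ _ hd1 hd1').mp h1)
      · exact Or.inr ((hEle _ _ hd1' hd1).mp h1)
    have := top_eq_top_of_cmp h hd1 hd1' hcmp
    rw [top_eq_of_le h hd1 hm.1 hd2, top_eq_of_le h hd1' hm'.1 hd2'] at this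
    exact this


/-- The canonical representative: bottom segments of the sorted chains of `α`. -/
noncomputable def gF (P : Finset α) : Finset α :=
  univ.filter (fun a =>
    idx (univ : Finset α) (top (univ : Finset α) a) < f P (ht (univ : Finset α) a))

lemma mem_gF {P : Finset α} {a : α} :
    a ∈ gF P ↔ idx (univ : Finset α) (top (univ : Finset α) a) < f P (ht (univ : Finset α) a) := by
  simp [gF]

lemma gF_mono {P₁ P₂ : Finset α} (hf : ∀ k, 1 ≤ k → f P₁ k ≤ f P₂ k) :
    gF P₁ ⊆ gF P₂ := by
  intro a ha
  rw [mem_gF] at ha ⊢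
  exact lt_of_lt_of_le ha (hf _ (ht_pos (mem_univ a)))

lemma f_le_of_gF_subset (h : IsDisjointUnionOfChains α) {P₁ P₂ : Finset α}
    (hsub : gF P₁ ⊆ gF P₂) : ∀ k, 1 ≤ k → f P₁ k ≤ f P₂ k := by
  intro k hk
  rcases Nat.eq_zero_or_pos (f P₁ k) with h0 | h0
  · omega
  set t := f P₁ k - 1 with htdef
  have ht1 : t < f P₁ k := by omega
  have ht2 : t < f (univ : Finset α) k := lt_of_lt_of_le ht1 (f_le_f_univ h P₁ k)
  have ht3 : t < (maxs (univ : Finset α)).card :=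
    lt_of_lt_of_le ht2 (card_le_card (filter_subset _ _))
  obtain ⟨m, hm, hmi⟩ := idx_surj ht3
  have hkm : k ≤ ht (univ : Finset α) m := (idx_lt_f_iff hm).mp (hmi ▸ ht2)
  obtain ⟨hd1, hd2, hd3⟩ := pick_spec h (mem_univ m) hk hkm
  have htop : top (univ : Finset α) (pick univ m k) = m :=
    top_eq_of_le h (mem_univ _) hm hd2
  have hdg : pick univ m k ∈ gF P₁ := by
    rw [mem_gF, htop, hmi, hd3]
    exact ht1
  have := hsub hdg
  rw [mem_gF, htop, hmi, hd3] at this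
  omega

lemma ht_gF (h : IsDisjointUnionOfChains α) {P : Finset α} {a : α} (ha : a ∈ gF P) :
    ht (gF P) a = ht (univ : Finset α) a := by
  unfold ht
  congr 1
  apply Finset.Subset.antisymm
  · exact filter_subset_filter _ (filter_subset _ _)
  · intro x hx
    rw [mem_filter] at hx ⊢
    refine ⟨?_, hx.2⟩
    rw [mem_gF] at ha ⊢
    rw [top_eq_top_of_cmp h (mem_univ x) (mem_univ a) (Or.inl hx.2)]
    exact lt_of_lt_of_le ha (f_antitone P (ht_mono _ hx.2))

lemma f_gF (h : IsDisjointUnionOfChains α) (P : Finset α) {k : ℕ} (hk : 1 ≤ k) :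
    f (gF P) k = f P k := by
  have hcard : f P k ≤ (maxs (univ : Finset α)).card :=
    le_trans (f_le_f_univ h P k) (card_le_card (filter_subset _ _))
  rw [← card_idx_lt hcard]
  apply le_antisymm
  · apply Finset.card_le_card_of_injOn (fun m' => top (univ : Finset α) m')
    · intro m' hm'
      rw [Finset.mem_coe, mem_filter] at hm'
      have hm'g : m' ∈ gF P := (mem_maxs.mp hm'.1).1
      have hht : ht (univ : Finset α) m' = ht (gF P) m' := (ht_gF h hm'g).symm
      obtain ⟨ht1, ht2⟩ := top_spec (P := (univ : Finset α)) (mem_univ m')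
      rw [Finset.mem_coe, mem_filter]
      refine ⟨ht1, ?_⟩
      have := mem_gF.mp hm'g
      calc idx (univ : Finset α) (top univ m') < f P (ht (univ : Finset α) m') := this
      _ ≤ f P k := f_antitone P (by rw [hht]; exact hm'.2)
    · intro x hx y hy hxy
      rw [Finset.mem_coe, mem_filter] at hx hy
      simp only at hxy
      have hx2 := (top_spec (P := (univ : Finset α)) (mem_univ x)).2
      have hy2 := (top_spec (P := (univ : Finset α)) (mem_univ y)).2
      rw [hxy] at hx2
      exact maxs_eq_of_cmp hx.1 hy.1 (h x y _ (Or.inl hx2) (Or.inl hy2))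
  · -- reverse injection: chains of gF P with given sizes exist
    have hpick : ∀ m : α, ∃ d : α, m ∈ maxs (univ : Finset α) ∧ idx (univ : Finset α) m < f P k →
        d ∈ maxs (gF P) ∧ k ≤ ht (gF P) d ∧ top (univ : Finset α) d = m := by
      intro m
      by_cases hm : m ∈ maxs (univ : Finset α) ∧ idx (univ : Finset α) m < f P k
      · obtain ⟨hm1, hm2⟩ := hm
        set S : Finset ℕ := (Finset.Icc 1 (ht (univ : Finset α) m)).filter
          (fun j => idx (univ : Finset α) m < f P j) with hSdef
        have hkS : k ∈ S := by
          rw [hSdef, mem_filter, Finset.mem_Icc]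
          have hkm : k ≤ ht (univ : Finset α) m := (idx_lt_f_iff hm1).mp
            (lt_of_lt_of_le hm2 (le_trans (f_le_f_univ h P k) (le_refl _)))
          exact ⟨⟨hk, hkm⟩, hm2⟩
        have hSne : S.Nonempty := ⟨k, hkS⟩
        set s := S.max' hSne with hsdef
        have hsS : s ∈ S := S.max'_mem hSne
        rw [hSdef, mem_filter, Finset.mem_Icc] at hsS
        obtain ⟨⟨hs1, hs2⟩, hs3⟩ := hsS
        obtain ⟨hd1, hd2, hd3⟩ := pick_spec h (mem_univ m) hs1 hs2
        set d := pick univ m s with hddef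
        have htopd : top (univ : Finset α) d = m := top_eq_of_le h (mem_univ _) hm1 hd2
        have hdg : d ∈ gF P := by rw [mem_gF, htopd, hd3]; exact hs3
        have hks : k ≤ s := S.le_max' k hkS
        refine ⟨d, fun _ => ⟨?_, ?_, htopd⟩⟩
        · rw [mem_maxs]
          refine ⟨hdg, ?_⟩
          intro x hx hdx
          have htopx : top (univ : Finset α) x = m := by
            rw [top_eq_top_of_cmp h (mem_univ x) (mem_univ d) (Or.inr hdx), htopd]
          have hxm : x ≤ m := htopx ▸ (top_spec (mem_univ x)).2
          have hxS : ht (univ : Finset α) x ∈ S := by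
            rw [hSdef, mem_filter, Finset.mem_Icc]
            refine ⟨⟨ht_pos (mem_univ x), ht_mono _ hxm⟩, ?_⟩
            have := mem_gF.mp hx
            rwa [htopx] at this
          have h1 : ht (univ : Finset α) x ≤ s := S.le_max' _ hxS
          have h2 : s ≤ ht (univ : Finset α) x := hd3 ▸ ht_mono _ hdx
          exact eq_of_ht_eq (mem_univ x) (mem_univ d)
            (Or.inr hdx) (by omega)
        · rw [ht_gF h hdg, hd3]; exact hks
      · exact ⟨m, fun hc => absurd hc hm⟩
    choose dd hdd using hpick
    apply Finset.card_le_card_of_injOn dd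
    · intro m hm
      rw [Finset.mem_coe, mem_filter] at hm
      obtain ⟨h1, h2, h3⟩ := hdd m hm
      rw [Finset.mem_coe, mem_filter]
      exact ⟨h1, h2⟩
    · intro x hx y hy hxy
      rw [Finset.mem_coe, mem_filter] at hx hy
      obtain ⟨_, _, h3x⟩ := hdd x hx
      obtain ⟨_, _, h3y⟩ := hdd y hy
      rw [← h3x, ← h3y, hxy]


lemma f_coe (P : Finset α) (inst : Fintype ↥(↑P : Set α)) (k : ℕ) :
    f (@Set.toFinset α (↑P) inst) k = f P k := by
  have hPP : @Set.toFinset α (↑P) inst = P := by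
    ext x
    rw [Set.mem_toFinset, Finset.mem_coe]
  rw [hPP]

lemma subrep (h : IsDisjointUnionOfChains α) : SubRepresentable α := by
  refine ⟨fun S => ↑(gF S.toFinset), ?_, ?_⟩
  · intro P₁ P₂
    constructor
    · rintro ⟨e⟩
      have hf : ∀ k, 1 ≤ k → f P₁.toFinset k ≤ f P₂.toFinset k :=
        fun k hk => f_le_of_emb h e hk
      exact fun a ha => Finset.mem_coe.mpr (gF_mono hf (Finset.mem_coe.mp ha))
    · intro hsub
      refine emb_of_f_le h ?_
      exact f_le_of_gF_subset h (Finset.coe_subset.mp hsub)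
  · intro S
    constructor
    · show Nonempty (↥S ↪o ↥(↑(gF S.toFinset) : Set α))
      refine emb_of_f_le h ?_
      intro k hk
      rw [f_coe]
      exact (f_gF h S.toFinset hk).ge
    · show Nonempty (↥(↑(gF S.toFinset) : Set α) ↪o ↥S)
      refine emb_of_f_le h ?_
      intro k hk
      rw [f_coe]
      exact (f_gF h S.toFinset hk).le

end SubrepAux

theorem finite_disjoint_union_of_chains_subrep (α : Type*) [PartialOrder α] [Finite α]
    (h : IsDisjointUnionOfChains α) : SubRepresentable α := by
  cases nonempty_fintype α
  exact SubrepAux.subrep h
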